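/- arXiv:0712.0788 — 3 statements merged into one kernel-verified Lean document; each statement's English description precedes it below -/
import Mathlib

section
/- Let F : C → D be a monoidal functor between monoidal categories admitting a right adjoint G : D → C. For X ∈ C and Y ∈ D, consider the canonical 'projection' morphism X ⊗ G(Y) → G(F(X) ⊗ Y), defined as the adjoint of the map F(X ⊗ G(Y)) ≅ F(X) ⊗ F(G(Y)) → F(X) ⊗ Y (using the monoidal structure of F and the counit of the adjunction). If X has a left dual in C, then this projection morphism is an isomorphism for every Y ∈ D. -/
open CategoryTheory MonoidalCategory

section Aux

open Functor.LaxMonoidal Functor.OplaxMonoidal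

variable {C D : Type*} [Category C] [Category D] [MonoidalCategory C] [MonoidalCategory D]

/-- A (strong) monoidal functor sends an exact pairing to an exact pairing. -/
def exactPairingOfMonoidal (F : C ⥤ D) [F.Monoidal] (X Y : C) [ExactPairing X Y] :
    ExactPairing (F.obj X) (F.obj Y) where
  coevaluation' := ε F ≫ F.map (η_ X Y) ≫ δ F X Y
  evaluation' := μ F Y X ≫ F.map (ε_ X Y) ≫ η F
  coevaluation_evaluation' := by
    haveI : Epi (δ F Y (𝟙_ C)) := inferInstance
    haveI : Mono (μ F (𝟙_ C) Y) := inferInstance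
    have := F.congr_map (ExactPairing.coevaluation_evaluation X Y)
    simp only [Functor.map_comp, Functor.Monoidal.map_whiskerLeft,
      Functor.Monoidal.map_whiskerRight, Functor.Monoidal.map_rightUnitor,
      Functor.Monoidal.map_leftUnitor_inv, Functor.Monoidal.map_associator_inv,
      Category.assoc, Functor.Monoidal.μ_δ_assoc, cancel_epi] at this
    have h2 : F.obj Y ◁ F.map (η_ X Y) ≫ F.obj Y ◁ δ F X Y ≫ (α_ _ _ _).inv ≫
        μ F Y X ▷ F.obj Y ≫ F.map (ε_ X Y) ▷ F.obj Y =
        F.obj Y ◁ η F ≫ (ρ_ (F.obj Y)).hom ≫ (λ_ (F.obj Y)).inv ≫ ε F ▷ F.obj Y := by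
      rw [← cancel_mono (μ F (𝟙_ C) Y)]; simpa using this
    simp only [MonoidalCategory.whiskerLeft_comp, comp_whiskerRight, Category.assoc]
    rw [reassoc_of% h2]
    simp [Functor.Monoidal.whiskerLeft_ε_η_assoc, Functor.Monoidal.whiskerRight_ε_η]
  evaluation_coevaluation' := by
    haveI : Epi (δ F (𝟙_ C) X) := inferInstance
    haveI : Mono (μ F X (𝟙_ C)) := inferInstance
    have := F.congr_map (ExactPairing.evaluation_coevaluation X Y)
    simp only [Functor.map_comp, Functor.Monoidal.map_whiskerLeft,
      Functor.Monoidal.map_whiskerRight, Functor.Monoidal.map_leftUnitor,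
      Functor.Monoidal.map_rightUnitor_inv, Functor.Monoidal.map_associator,
      Category.assoc, Functor.Monoidal.μ_δ_assoc, cancel_epi] at this
    have h2 : F.map (η_ X Y) ▷ F.obj X ≫ δ F X Y ▷ F.obj X ≫ (α_ _ _ _).hom ≫
        F.obj X ◁ μ F Y X ≫ F.obj X ◁ F.map (ε_ X Y) =
        η F ▷ F.obj X ≫ (λ_ (F.obj X)).hom ≫ (ρ_ (F.obj X)).inv ≫ F.obj X ◁ ε F := by
      rw [← cancel_mono (μ F X (𝟙_ C))]; simpa using this
    simp only [MonoidalCategory.whiskerLeft_comp, comp_whiskerRight, Category.assoc]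
    rw [reassoc_of% h2]
    simp [Functor.Monoidal.whiskerRight_ε_η_assoc, Functor.Monoidal.whiskerLeft_ε_η]

theorem projection_formula_key (F : C ⥤ D) [F.Monoidal] (G : D ⥤ C) (adj : F ⊣ G)
    (X Xd : C) [ExactPairing X Xd] (Y : D) (Z : C) (g : Z ⟶ X ⊗ G.obj Y) :
    μ F Xd Z ≫ F.map (Xd ◁ g) ≫ F.map (α_ Xd X (G.obj Y)).inv ≫
        F.map (ε_ X Xd ▷ G.obj Y) ≫ F.map (λ_ (G.obj Y)).hom ≫ adj.counit.app Y =
      F.obj Xd ◁ F.map g ≫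
        F.obj Xd ◁ δ F X (G.obj Y) ≫
          F.obj Xd ◁ F.obj X ◁ adj.counit.app Y ≫
            (α_ (F.obj Xd) (F.obj X) Y).inv ≫
              μ F Xd X ▷ Y ≫ F.map (ε_ X Xd) ▷ Y ≫ η F ▷ Y ≫ (λ_ Y).hom := by
  simp only [Functor.id_obj, Functor.comp_obj]
  simp only [μ_natural_right_assoc, Functor.Monoidal.map_whiskerRight,
    Functor.Monoidal.map_associator_inv, Functor.Monoidal.map_leftUnitor, Category.assoc,
    Functor.Monoidal.μ_δ_assoc, Functor.Monoidal.δ_μ_assoc, Functor.Monoidal.whiskerLeft_μ_δ_assoc,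
    ← δ_natural_right_assoc]
  conv_rhs => rw [associator_inv_naturality_right_assoc, whisker_exchange_assoc,
    whisker_exchange_assoc, whisker_exchange_assoc, leftUnitor_naturality]

end Aux

/-- **Projection formula.** Let `F : C ⥤ D` be a (strong) monoidal functor with right
adjoint `G`. For `X : C` and `Y : D`, the canonical projection morphism
`X ⊗ G(Y) ⟶ G(F(X) ⊗ Y)` — the adjoint of `F(X ⊗ G Y) ≅ F X ⊗ F (G Y) ⟶ F X ⊗ Y` —
is an isomorphism whenever `X` has a left dual (given by coevaluation
`η : 𝟙 ⟶ X ⊗ Xd` and evaluation `ε : Xd ⊗ X ⟶ 𝟙` satisfying the triangle identities). -/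
theorem projection_formula_isIso_of_dual
    {C : Type*} [Category C] [MonoidalCategory C]
    {D : Type*} [Category D] [MonoidalCategory D]
    (F : C ⥤ D) [F.Monoidal] (G : D ⥤ C) (adj : F ⊣ G)
    (X Xd : C) (η : 𝟙_ C ⟶ X ⊗ Xd) (ε : Xd ⊗ X ⟶ 𝟙_ C)
    (tri₁ : (λ_ X).inv ≫ (η ▷ X) ≫ (α_ X Xd X).hom ≫ (X ◁ ε) ≫ (ρ_ X).hom = 𝟙 X)
    (tri₂ : (ρ_ Xd).inv ≫ (Xd ◁ η) ≫ (α_ Xd X Xd).inv ≫ (ε ▷ Xd) ≫ (λ_ Xd).hom = 𝟙 Xd)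
    (Y : D) :
    IsIso ((adj.homEquiv (X ⊗ G.obj Y) (F.obj X ⊗ Y))
      (Functor.OplaxMonoidal.δ F X (G.obj Y) ≫ (F.obj X ◁ adj.counit.app Y))) := by
  letI pC : ExactPairing X Xd :=
    { coevaluation' := η
      evaluation' := ε
      coevaluation_evaluation' := by
        simpa using congrArg (fun f => (ρ_ Xd).hom ≫ f ≫ (λ_ Xd).inv) tri₂
      evaluation_coevaluation' := by
        simpa using congrArg (fun f => (λ_ X).hom ≫ f ≫ (ρ_ X).inv) tri₁ }
  letI pD : ExactPairing (F.obj X) (F.obj Xd) := exactPairingOfMonoidal F X Xd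
  rw [isIso_iff_yoneda_map_bijective]
  intro Z
  let e : (Z ⟶ X ⊗ G.obj Y) ≃ (Z ⟶ G.obj (F.obj X ⊗ Y)) :=
    (tensorLeftHomEquiv Z X Xd (G.obj Y)).symm.trans
      ((adj.homEquiv (Xd ⊗ Z) Y).symm.trans
        (((asIso (Functor.LaxMonoidal.μ F Xd Z)).symm.homCongr (Iso.refl Y)).trans
          ((tensorLeftHomEquiv (F.obj Z) (F.obj X) (F.obj Xd) Y).trans
            (adj.homEquiv Z (F.obj X ⊗ Y)))))
  have he : ∀ g : Z ⟶ X ⊗ G.obj Y,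
      e g = g ≫ (adj.homEquiv (X ⊗ G.obj Y) (F.obj X ⊗ Y))
        (Functor.OplaxMonoidal.δ F X (G.obj Y) ≫ (F.obj X ◁ adj.counit.app Y)) := by
    intro g
    show (adj.homEquiv Z (F.obj X ⊗ Y)) ((tensorLeftHomEquiv (F.obj Z) (F.obj X) (F.obj Xd) Y)
      ((asIso (Functor.LaxMonoidal.μ F Xd Z)).symm.homCongr (Iso.refl Y)
        ((adj.homEquiv (Xd ⊗ Z) Y).symm ((tensorLeftHomEquiv Z X Xd (G.obj Y)).symm g)))) = _
    rw [← Adjunction.homEquiv_naturality_left]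
    congr 1
    have : ((asIso (Functor.LaxMonoidal.μ F Xd Z)).symm.homCongr (Iso.refl Y))
        ((adj.homEquiv (Xd ⊗ Z) Y).symm ((tensorLeftHomEquiv Z X Xd (G.obj Y)).symm g)) =
        (tensorLeftHomEquiv (F.obj Z) (F.obj X) (F.obj Xd) Y).symm
          (F.map g ≫ Functor.OplaxMonoidal.δ F X (G.obj Y) ≫ (F.obj X ◁ adj.counit.app Y)) := by
      have k := projection_formula_key F G adj X Xd Y Z g
      simp only [Iso.homCongr_apply, Iso.symm_inv, asIso_hom, Iso.refl_hom, Category.comp_id,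
        Adjunction.homEquiv_counit, tensorLeftHomEquiv, Equiv.coe_fn_symm_mk, Functor.map_comp,
        Category.assoc, MonoidalCategory.whiskerLeft_comp, comp_whiskerRight]
      show _ = _  -- evaluation of pD unfolds to the composite
      convert k using 2; simp [pD, exactPairingOfMonoidal, ExactPairing.evaluation,
        MonoidalCategory.whiskerLeft_comp, comp_whiskerRight]
      simp only [← comp_whiskerRight_assoc]; rfl
    rw [this, Equiv.apply_symm_apply]
  have : (fun g : Z ⟶ X ⊗ G.obj Y => g ≫ (adj.homEquiv (X ⊗ G.obj Y) (F.obj X ⊗ Y))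
      (Functor.OplaxMonoidal.δ F X (G.obj Y) ≫ (F.obj X ◁ adj.counit.app Y))) = e :=
    funext fun g => (he g).symm
  rw [this]
  exact e.bijective
end

section
/- Let D be a triangulated category equipped with a t-structure, and let D₁ ⊆ D be a full triangulated subcategory closed under isomorphisms whose inclusion functor E : D₁ → D admits a right adjoint R : D → D₁. Assume that the composite E∘R is left t-exact, i.e. E(R(X)) ∈ D^{≥0} whenever X ∈ D^{≥0}. Then D₁ is stable under the truncation functors of D: for every Z ∈ D₁, both τ^{≤0}(E Z) and τ^{≥1}(E Z) lie in the essential image of E. Consequently D₁ carries a unique t-structure for which E is t-exact. -/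
open CategoryTheory Limits Pretriangulated Triangulated

/-- Let `D` be a triangulated category with a t-structure `t`, and let `D₁` be a full
triangulated subcategory (given by the iso-closed predicate `S.P`) whose inclusion
`E` admits a right adjoint `R` such that `E ∘ R` is left t-exact.  Then `D₁` is stable
under truncations:  for every `Z ∈ D₁` and every truncation triangle
`A ⟶ Z ⟶ B ⟶ A[1]` (with `A ∈ D^{≤0}`, `B ∈ D^{≥1}`), both `A` and `B` lie in `D₁`
(equivalently, in the essential image of `E`); consequently truncation triangles for
objects of `D₁` exist entirely inside `D₁`, so `D₁` carries the (unique) t-structure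
for which `E` is t-exact. -/
theorem subcategory_stable_under_truncation
    {D : Type*} [Category D] [Preadditive D] [HasZeroObject D] [HasShift D ℤ]
    [∀ n : ℤ, (shiftFunctor D n).Additive] [Pretriangulated D]
    (t : TStructure D)
    (S : ObjectProperty D) [S.IsTriangulated]
    (hiso : ∀ ⦃X Y : D⦄, (X ≅ Y) → S X → S Y)
    (R : D ⥤ S.FullSubcategory)
    (adj : S.ι ⊣ R)
    (hleft : ∀ X : D, t.ge 0 X →
      t.ge 0 ((S.ι).obj (R.obj X))) :
    (∀ Z : D, S Z →
      ∀ (A B : D) (a : A ⟶ Z) (b : Z ⟶ B) (c : B ⟶ A⟦(1 : ℤ)⟧),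
        (Triangle.mk a b c ∈ distTriang D) → t.le 0 A → t.ge 1 B →
          S A ∧ S B) ∧
    (∀ Z : D, S Z →
      ∃ (A B : D) (_ : t.le 0 A) (_ : t.ge 1 B) (_ : S A) (_ : S B)
        (a : A ⟶ Z) (b : Z ⟶ B) (c : B ⟶ A⟦(1 : ℤ)⟧),
        Triangle.mk a b c ∈ distTriang D) := by
  classical
  set E := S.ι with hE
  have hP : ∀ X : D, S (E.obj (R.obj X)) := fun X => (R.obj X).2
  -- postcomposition with the counit is bijective on maps from objects of `S`
  have hbij : ∀ (W X : D), S W →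
      Function.Bijective (fun φ : W ⟶ E.obj (R.obj X) => φ ≫ adj.counit.app X) := by
    intro W X hW
    have heq : (fun φ : W ⟶ E.obj (R.obj X) => φ ≫ adj.counit.app X)
        = fun φ => (adj.homEquiv ⟨W, hW⟩ X).symm (S.homMk φ) := by
      funext φ
      rw [Adjunction.homEquiv_counit]
      rfl
    rw [heq]
    exact (adj.homEquiv ⟨W, hW⟩ X).symm.bijective.comp (f := S.homMk)
      ⟨fun a b h => congrArg (fun f => f.hom) h, S.homMk_surjective⟩
  -- the key t-exactness transfer : `E (R B)` is `≥ 1` when `B` is `≥ 1`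
  have hGE1 : ∀ X : D, t.ge 1 X → t.ge 1 (E.obj (R.obj X)) := by
    intro B hB
    have hW₁P : S ((E.obj (R.obj B))⟦(1 : ℤ)⟧) := S.le_shift 1 _ (hP B)
    have hW₂P : S (E.obj (R.obj (B⟦(1 : ℤ)⟧))) := hP _
    -- bijectivity of postcomposition with the shifted counit
    have hbij₁ : ∀ (W : D), S W →
        Function.Bijective (fun φ : W ⟶ (E.obj (R.obj B))⟦(1 : ℤ)⟧ =>
          φ ≫ (adj.counit.app B)⟦(1 : ℤ)⟧') := by
      intro W hW
      have hW' : S (W⟦(-1 : ℤ)⟧) := S.le_shift (-1) _ hW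
      have hFF : (shiftFunctor D (1 : ℤ)).FullyFaithful :=
        Functor.FullyFaithful.ofFullyFaithful _
      let e : (W⟦(-1 : ℤ)⟧)⟦(1 : ℤ)⟧ ≅ W := (shiftEquiv D (1 : ℤ)).counitIso.app W
      let g : (W⟦(-1 : ℤ)⟧ ⟶ E.obj (R.obj B)) ≃ (W ⟶ (E.obj (R.obj B))⟦(1 : ℤ)⟧) :=
        hFF.homEquiv.trans e.homFromEquiv
      let g' : (W⟦(-1 : ℤ)⟧ ⟶ B) ≃ (W ⟶ B⟦(1 : ℤ)⟧) :=
        hFF.homEquiv.trans e.homFromEquiv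
      have key : (fun φ : W ⟶ (E.obj (R.obj B))⟦(1 : ℤ)⟧ =>
          φ ≫ (adj.counit.app B)⟦(1 : ℤ)⟧')
          = g' ∘ (fun ψ : W⟦(-1 : ℤ)⟧ ⟶ E.obj (R.obj B) => ψ ≫ adj.counit.app B) ∘ g.symm := by
        funext φ
        have hφ : φ = g (g.symm φ) := (g.apply_symm_apply φ).symm
        conv_lhs => rw [hφ]
        simp only [g, g', Equiv.trans_apply, Function.comp_apply,
          Functor.FullyFaithful.homEquiv_apply, Iso.homFromEquiv_apply,
          Category.assoc, ← Functor.map_comp]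
      rw [key]
      exact g'.bijective.comp ((hbij _ B hW').comp g.symm.bijective)
    -- compare `(E R B)⟦1⟧` and `E R (B⟦1⟧)`
    obtain ⟨θ, hθ⟩ := (hbij _ (B⟦(1 : ℤ)⟧) hW₁P).2 ((adj.counit.app B)⟦(1 : ℤ)⟧')
    obtain ⟨θ', hθ'⟩ := (hbij₁ _ hW₂P).2 (adj.counit.app (B⟦(1 : ℤ)⟧))
    replace hθ : θ ≫ adj.counit.app (B⟦(1 : ℤ)⟧) = (adj.counit.app B)⟦(1 : ℤ)⟧' := hθ
    replace hθ' : θ' ≫ (adj.counit.app B)⟦(1 : ℤ)⟧' = adj.counit.app (B⟦(1 : ℤ)⟧) := hθ'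
    have h1 : θ ≫ θ' = 𝟙 _ := by
      apply (hbij₁ _ hW₁P).1
      show (θ ≫ θ') ≫ _ = 𝟙 _ ≫ _
      rw [Category.assoc, hθ', hθ, Category.id_comp]
    have h2 : θ' ≫ θ = 𝟙 _ := by
      apply (hbij _ (B⟦(1 : ℤ)⟧) hW₂P).1
      show (θ' ≫ θ) ≫ _ = 𝟙 _ ≫ _
      rw [Category.assoc, hθ, hθ', Category.id_comp]
    have hGE0shift : t.ge 0 ((E.obj (R.obj B))⟦(1 : ℤ)⟧) :=
      (t.ge 0).prop_of_iso (Iso.mk θ θ' h1 h2).symm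
        (hleft _ (t.ge_shift 1 1 0 rfl B hB))
    have : t.ge 1 (((E.obj (R.obj B))⟦(1 : ℤ)⟧)⟦(-1 : ℤ)⟧) :=
      t.ge_shift 0 (-1) 1 (by omega) _ hGE0shift
    exact (t.ge 1).prop_of_iso
      ((shiftEquiv D (1 : ℤ)).unitIso.app (E.obj (R.obj B))).symm this
  -- the main stability statement
  have part1 : ∀ Z : D, S Z →
      ∀ (A B : D) (a : A ⟶ Z) (b : Z ⟶ B) (c : B ⟶ A⟦(1 : ℤ)⟧),
        (Triangle.mk a b c ∈ distTriang D) → t.le 0 A → t.ge 1 B →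
          S A ∧ S B := by
    intro Z hZ A B a b c hT hA hB
    obtain ⟨u, hu⟩ := (hbij Z B hZ).2 b
    have hau : a ≫ u = 0 := t.zero' _ hA (hGE1 B hB)
    obtain ⟨s, hs⟩ : ∃ s : B ⟶ E.obj (R.obj B), u = b ≫ s := Triangle.yoneda_exact₂ _ hT u hau
    replace hu : u ≫ adj.counit.app B = b := hu
    replace hs : u = b ≫ s := hs
    have hA1 : t.le 0 (A⟦(1 : ℤ)⟧) :=
      t.le_monotone (show (-1 : ℤ) ≤ 0 by omega) _ (t.le_shift 0 1 (-1) (by omega) A hA)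
    have hsε : s ≫ adj.counit.app B = 𝟙 B := by
      have hzero : b ≫ ((s ≫ adj.counit.app B : B ⟶ B) - 𝟙 B) = 0 := by
        rw [Preadditive.comp_sub, Category.comp_id, ← Category.assoc, ← hs, hu, sub_self]
      obtain ⟨g, hg⟩ : ∃ g : A⟦(1 : ℤ)⟧ ⟶ B, (s ≫ adj.counit.app B : B ⟶ B) - 𝟙 B = c ≫ g :=
        Triangle.yoneda_exact₃ _ hT _ hzero
      have hg0 : g = 0 := t.zero' g hA1 hB
      rw [hg0, comp_zero, sub_eq_zero] at hg
      exact hg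
    have hεs : adj.counit.app B ≫ s = 𝟙 _ := by
      apply (hbij _ B (hP B)).1
      show (adj.counit.app B ≫ s) ≫ _ = 𝟙 _ ≫ _
      rw [Category.assoc, hsε, Category.id_comp]
      exact Category.comp_id _
    have hPB : S B := hiso (Iso.mk (adj.counit.app B) s hεs hsε) (hP B)
    obtain ⟨A', hA', ⟨eA⟩⟩ := S.ext_of_isTriangulatedClosed₁' _ hT hZ hPB
    exact ⟨hiso eA.symm hA', hPB⟩
  refine ⟨part1, fun Z hZ => ?_⟩
  obtain ⟨A, B, hA, hB, f, g, h, mem⟩ := t.exists_triangle_zero_one Z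
  obtain ⟨hPA, hPB⟩ := part1 Z hZ A B f g h mem hA hB
  exact ⟨A, B, hA, hB, hPA, hPB, f, g, h, mem⟩
end

section
/- Let D be a triangulated category with a t-structure, E a triangulated category, and Ψ : E → D a triangulated functor admitting a right adjoint Φ : D → E. Assume that the counit Ψ(Φ(Y)) → Y is an isomorphism for every Y ∈ D^+ (in particular Φ restricted to D^+ is fully faithful). Define E^{≤0} := { X ∈ E : Ψ(X) ∈ D^{≤0} } and E^{>0} := essential image of Φ restricted to D^{>0}. Then (E^{≤0}, E^{>0}[1]) is a t-structure on E; moreover Ψ is t-exact for this t-structure, and Φ restricts to a t-exact equivalence D^+ → E^+ with quasi-inverse given by Ψ. -/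
open CategoryTheory Limits Pretriangulated Triangulated

/-- Let `D` be triangulated with a t-structure `tD`, `E` triangulated, and `Ψ : E ⥤ D` a
triangulated functor with right adjoint `Φ` whose counit `Ψ Φ Y ⟶ Y` is an isomorphism
for all `Y ∈ D⁺`.  Then `E` carries a t-structure `tE` with
`E^{≤0} = {X : Ψ X ∈ D^{≤0}}` and `E^{>0}` = the essential image of `Φ` on `D^{>0}`;
moreover `Ψ` is t-exact, and `Φ` restricts to a t-exact equivalence `D⁺ ⟶ E⁺` (it is
t-exact on `D⁺` and its quasi-inverse is `Ψ`: the unit is an isomorphism on `E⁺`). -/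
theorem transferred_tStructure_exists
    {D : Type*} [Category D] [Preadditive D] [HasZeroObject D] [HasShift D ℤ]
    [∀ n : ℤ, (shiftFunctor D n).Additive] [Pretriangulated D]
    {E : Type*} [Category E] [Preadditive E] [HasZeroObject E] [HasShift E ℤ]
    [∀ n : ℤ, (shiftFunctor E n).Additive] [Pretriangulated E]
    (tD : TStructure D)
    (Ψ : E ⥤ D) [Ψ.CommShift ℤ] [Ψ.IsTriangulated]
    (Φ : D ⥤ E) (adj : Ψ ⊣ Φ)
    (hcounit : ∀ Y : D, (∃ n : ℤ, tD.ge n Y) → IsIso (adj.counit.app Y)) :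
    ∃ tE : TStructure E,
      (∀ X : E, tE.le 0 X ↔ tD.le 0 (Ψ.obj X)) ∧
      (∀ X : E, tE.ge 1 X ↔ ∃ (Y : D), tD.ge 1 Y ∧ Nonempty (X ≅ Φ.obj Y)) ∧
      (∀ (n : ℤ) (X : E), tE.le n X → tD.le n (Ψ.obj X)) ∧
      (∀ (n : ℤ) (X : E), tE.ge n X → tD.ge n (Ψ.obj X)) ∧
      (∀ (n : ℤ) (Y : D), (∃ m : ℤ, tD.ge m Y) → tD.le n Y → tE.le n (Φ.obj Y)) ∧
      (∀ (n : ℤ) (Y : D), (∃ m : ℤ, tD.ge m Y) → tD.ge n Y → tE.ge n (Φ.obj Y)) ∧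
      (∀ X : E, (∃ n : ℤ, tE.ge n X) → IsIso (adj.unit.app X)) := by
  -- The right adjoint `Φ` commutes with shifts (objectwise, up to iso).
  have phiShift : ∀ (a : ℤ) (Y : D), Nonempty ((Φ.obj Y)⟦a⟧ ≅ Φ.obj (Y⟦a⟧)) := by
    intro a Y
    exact ⟨(Adjunction.rightAdjointUniq
      ((((shiftEquiv' E (-a) a (by omega)).toAdjunction.comp adj).ofNatIsoLeft
        (Ψ.commShiftIso (-a))))
      (adj.comp (shiftEquiv' D (-a) a (by omega)).toAdjunction)).app Y⟩
  refine ⟨{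
    le := fun n X => tD.le n (Ψ.obj X)
    ge := fun n X => ∃ Y : D, tD.ge n Y ∧ Nonempty (X ≅ Φ.obj Y)
    le_isClosedUnderIsomorphisms := fun n => ⟨fun e hX => (tD.le n).prop_of_iso (Ψ.mapIso e) hX⟩
    ge_isClosedUnderIsomorphisms := fun n => ⟨by
      rintro X X' e ⟨Y, hY, ⟨i⟩⟩
      exact ⟨Y, hY, ⟨e.symm ≪≫ i⟩⟩⟩
    le_shift := fun n a n' h X hX =>
      (tD.le n').prop_of_iso ((Ψ.commShiftIso a).app X).symm (tD.le_shift n a n' h _ hX)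
    ge_shift := by
      rintro n a n' h X ⟨Y, hY, ⟨i⟩⟩
      obtain ⟨j⟩ := phiShift a Y
      exact ⟨Y⟦a⟧, tD.ge_shift n a n' h Y hY, ⟨(shiftFunctor E a).mapIso i ≪≫ j⟩⟩
    zero' := by
      rintro X X' f hX ⟨Z, hZ, ⟨i⟩⟩
      have h0 : (adj.homEquiv X Z).symm (f ≫ i.hom) = 0 := tD.zero' _ hX hZ
      have h1 : (adj.homEquiv X Z).symm 0 = 0 := by
        simp [Adjunction.homEquiv_counit]
      have h2 : f ≫ i.hom = 0 := (adj.homEquiv X Z).symm.injective (h0.trans h1.symm)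
      rw [← zero_comp] at h2
      exact (cancel_mono i.hom).1 h2
    le_zero_le := fun X hX => tD.le_zero_le _ hX
    ge_one_le := by
      rintro X ⟨Y, hY, e⟩
      exact ⟨Y, tD.ge_one_le Y hY, e⟩
    exists_triangle_zero_one := by
      intro A
      obtain ⟨X₀, Y₁, hX₀, hY₁, f, g, h, mem⟩ := tD.exists_triangle_zero_one (Ψ.obj A)
      set gq : A ⟶ Φ.obj Y₁ := (adj.homEquiv A Y₁) g with hgq
      obtain ⟨X', f', h', mem'⟩ := distinguished_cocone_triangle₁ gq
      have memΨ := Ψ.map_distinguished _ mem'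
      have : IsIso (adj.counit.app Y₁) := hcounit Y₁ ⟨1, hY₁⟩
      have comm : (Ψ.mapTriangle.obj (Triangle.mk f' gq h')).mor₂ ≫ adj.counit.app Y₁ =
          𝟙 (Ψ.obj A) ≫ (Triangle.mk f g h).mor₂ := by
        change Ψ.map gq ≫ adj.counit.app Y₁ = 𝟙 (Ψ.obj A) ≫ g
        rw [Category.id_comp]
        change (adj.homEquiv A Y₁).symm gq = g
        rw [hgq, Equiv.symm_apply_apply]
      obtain ⟨a, ha₁, ha₂⟩ := complete_distinguished_triangle_morphism₁ _ _
        memΨ mem (𝟙 (Ψ.obj A)) (adj.counit.app Y₁) comm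
      have hiso : IsIso a := by
        have := isIso₁_of_isIso₂₃
          (Triangle.homMk _ _ a (𝟙 (Ψ.obj A)) (adj.counit.app Y₁) ha₁ comm ha₂)
          memΨ mem (by change IsIso (𝟙 (Ψ.obj A)); infer_instance) (by change IsIso (adj.counit.app Y₁); infer_instance)
        exact this
      refine ⟨X', Φ.obj Y₁, ?_, ⟨Y₁, hY₁, ⟨Iso.refl _⟩⟩, f', gq, h', mem'⟩
      exact (tD.le 0).prop_of_iso (@asIso _ _ _ _ a hiso).symm hX₀
  }, fun X => Iff.rfl, fun X => Iff.rfl, fun n X hX => hX, ?_, ?_, ?_, ?_⟩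
  · rintro n X ⟨Y, hY, ⟨e⟩⟩
    have : IsIso (adj.counit.app Y) := hcounit Y ⟨n, hY⟩
    exact (tD.ge n).prop_of_iso (Ψ.mapIso e ≪≫ asIso (adj.counit.app Y)).symm hY
  · intro n Y hplus hY
    have : IsIso (adj.counit.app Y) := hcounit Y hplus
    exact (tD.le n).prop_of_iso (asIso (adj.counit.app Y)).symm hY
  · intro n Y _ hY
    exact ⟨Y, hY, ⟨Iso.refl _⟩⟩
  · rintro X ⟨n, Y, hY, ⟨e⟩⟩
    have : IsIso (adj.counit.app Y) := hcounit Y ⟨n, hY⟩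
    have h1 : IsIso (adj.unit.app (Φ.obj Y)) := by
      have tri := adj.right_triangle_components Y
      exact ⟨Φ.map (adj.counit.app Y), tri, by
        rw [← cancel_mono (Φ.map (adj.counit.app Y)), Category.assoc, tri]
        simp⟩
    have heq : adj.unit.app X = e.hom ≫ adj.unit.app (Φ.obj Y) ≫ (Ψ ⋙ Φ).map e.inv := by
      rw [← adj.unit.naturality e.inv]
      simp
    rw [heq]
    infer_instance
end
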